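/- Let I ⊆ (0,∞) be a nonempty open interval, n ≥ 2, λ_1,…,λ_n, μ_1,…,μ_n > 0, α_1,…,α_n, β_1,…,β_n ∈ ℝ, and a, b ∈ ℝ. Define p_i(x) := λ_i x^{α_i}, q_i(x) := μ_i x^{β_i}, and define f(x) := x^a if a ≠ 0 and f(x) := log x if a = 0, g(x) := x^b if b ≠ 0 and g(x) := log x if b = 0. Assume that there exist γ > 0 and δ ∈ ℝ such that μ_i = γ λ_i and β_i = α_i + δ for all i ∈ {1,…,n}, and that min(a,0) ≤ δ + min(b,0) and max(a,0) ≤ δ + max(b,0). Then A_{f,p} is globally smaller than A_{g,q}, i.e., A_{f,p}(x_1,…,x_n) ≤ A_{g,q}(x_1,…,x_n) for all x_1,…,x_n ∈ I. -/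

import Mathlib

open Set Function Real

noncomputable def Ee (c u : ℝ) : ℝ := if c = 0 then u else (Real.exp (c*u) - 1)/c

lemma expInt (p q : ℝ) : ∫ s in (0:ℝ)..1, Real.exp (q*s + p)
    = if q = 0 then Real.exp p else (Real.exp (q + p) - Real.exp p)/q := by
  by_cases hq : q = 0
  · simp [hq]
  · rw [if_neg hq]
    have h := intervalIntegral.integral_comp_mul_add Real.exp hq p (a := 0) (b := 1)
    simp only [mul_zero, zero_add, mul_one, integral_exp, smul_eq_mul] at h
    rw [h]
    field_simp

lemma J_eval (c u d : ℝ) :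
    u * ∫ s in (0:ℝ)..1, Real.exp ((u*(max c 0 - min c 0))*s + u*(d + min c 0))
      = Real.exp (d*u) * Ee c u := by
  rw [expInt]
  rcases lt_trichotomy c 0 with hc | hc | hc
  · rw [max_eq_right hc.le, min_eq_left hc.le]
    by_cases hu : u = 0
    · simp [hu, Ee, hc.ne]
    · rw [if_neg (by simp [hu, hc.ne] : ¬ u * (0 - c) = 0)]
      rw [Ee, if_neg hc.ne]
      rw [show u * (0 - c) + u * (d + c) = u * d by ring,
        show u * (d + c) = u * d + u * c by ring, Real.exp_add,
        show c * u = u * c by ring, show d * u = u * d by ring,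
        show rexp (u*d) * ((rexp (u*c) - 1)/c) = (rexp (u*d) * (rexp (u*c) - 1))/c by ring]
      rw [← mul_div_assoc, div_eq_div_iff (by simp [sub_ne_zero, hu, hc.ne] : u*(0 - c) ≠ 0) hc.ne]
      ring
  · simp [hc, Ee, mul_comm]
  · rw [max_eq_left hc.le, min_eq_right hc.le]
    by_cases hu : u = 0
    · simp [hu, Ee, hc.ne']
    · rw [if_neg (by simp [hu, hc.ne'] : ¬ u * (c - 0) = 0)]
      rw [Ee, if_neg hc.ne']
      rw [show u * (c - 0) + u * (d + 0) = u * d + u * c by ring, Real.exp_add,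
        show u * (d + 0) = u * d by ring, show c * u = u * c by ring,
        show d * u = u * d by ring,
        show rexp (u*d) * ((rexp (u*c) - 1)/c) = (rexp (u*d) * (rexp (u*c) - 1))/c by ring]
      rw [← mul_div_assoc, div_eq_div_iff (by simp [sub_ne_zero, hu, hc.ne'] : u*(c - 0) ≠ 0) hc.ne']
      ring

lemma master {a b δ : ℝ} (hmin : min a 0 ≤ δ + min b 0) (hmax : max a 0 ≤ δ + max b 0)
    (u : ℝ) : Ee a u ≤ Real.exp (δ*u) * Ee b u := by
  have h1 : u * ∫ s in (0:ℝ)..1, Real.exp ((u*(max a 0 - min a 0))*s + u*(0 + min a 0))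
      = Ee a u := by simpa using J_eval a u 0
  rw [← h1, ← J_eval b u δ]
  have hint1 : IntervalIntegrable
      (fun s => Real.exp ((u*(max a 0 - min a 0))*s + u*(0 + min a 0)))
      MeasureTheory.volume 0 1 := (by fun_prop : Continuous _).intervalIntegrable 0 1
  have hint2 : IntervalIntegrable
      (fun s => Real.exp ((u*(max b 0 - min b 0))*s + u*(δ + min b 0)))
      MeasureTheory.volume 0 1 := (by fun_prop : Continuous _).intervalIntegrable 0 1
  rcases le_or_gt 0 u with hu | hu
  · apply mul_le_mul_of_nonneg_left _ hu
    apply intervalIntegral.integral_mono_on zero_le_one hint1 hint2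
    intro s hs
    apply Real.exp_le_exp.2
    nlinarith [mul_nonneg (mul_nonneg hu hs.1) (sub_nonneg.2 hmax),
      mul_nonneg (mul_nonneg hu (sub_nonneg.2 hs.2)) (sub_nonneg.2 hmin)]
  · apply mul_le_mul_of_nonpos_left _ hu.le
    apply intervalIntegral.integral_mono_on zero_le_one hint2 hint1
    intro s hs
    apply Real.exp_le_exp.2
    nlinarith [mul_nonneg (mul_nonneg (neg_nonneg.2 hu.le) hs.1) (sub_nonneg.2 hmax),
      mul_nonneg (mul_nonneg (neg_nonneg.2 hu.le) (sub_nonneg.2 hs.2)) (sub_nonneg.2 hmin)]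

lemma diff_eq (c A y : ℝ) (hA : 0 < A) (hy : 0 < y) :
    (if c = 0 then Real.log y else y ^ c) - (if c = 0 then Real.log A else A ^ c)
      = (if c = 0 then 1 else c * A ^ c) * Ee c (Real.log y - Real.log A) := by
  by_cases hc : c = 0
  · simp [hc, Ee]
  · rw [if_neg hc, if_neg hc, if_neg hc, Ee, if_neg hc,
      Real.rpow_def_of_pos hy, Real.rpow_def_of_pos hA]
    rw [show c * (Real.log y - Real.log A) = Real.log y * c - Real.log A * c by ring,
      Real.exp_sub]
    field_simp

lemma rpow_diff (δ A y : ℝ) (hA : 0 < A) (hy : 0 < y) :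
    y ^ δ = A ^ δ * Real.exp (δ * (Real.log y - Real.log A)) := by
  rw [Real.rpow_def_of_pos hy, Real.rpow_def_of_pos hA, ← Real.exp_add]
  congr 1
  ring

lemma pointwise {a b δ : ℝ} (hmin : min a 0 ≤ δ + min b 0) (hmax : max a 0 ≤ δ + max b 0)
    {A y : ℝ} (hA : 0 < A) (hy : 0 < y) :
    (if b < 0 then (-1:ℝ) else 1) * ((if b = 0 then 1 else b * A ^ b) * A ^ δ)
        / (if a = 0 then 1 else a * A ^ a)
        * ((if a = 0 then Real.log y else y ^ a) - (if a = 0 then Real.log A else A ^ a))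
      ≤ (if b < 0 then (-1:ℝ) else 1)
        * (y ^ δ * ((if b = 0 then Real.log y else y ^ b) - (if b = 0 then Real.log A else A ^ b))) := by
  set u := Real.log y - Real.log A with hu
  set σ : ℝ := if b < 0 then (-1:ℝ) else 1 with hσ
  set Ca : ℝ := if a = 0 then 1 else a * A ^ a with hCa
  set Cb : ℝ := if b = 0 then 1 else b * A ^ b with hCb
  have hCane : Ca ≠ 0 := by
    rw [hCa]; split
    · exact one_ne_zero
    · exact mul_ne_zero (by assumption) (Real.rpow_pos_of_pos hA a).ne'
  have hK : 0 < σ * Cb * A ^ δ := by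
    have hAδ := Real.rpow_pos_of_pos hA δ
    have hAb := Real.rpow_pos_of_pos hA b
    rw [hσ, hCb]
    rcases lt_trichotomy b 0 with h | h | h
    · rw [if_pos h, if_neg h.ne]
      have : b * A ^ b < 0 := mul_neg_of_neg_of_pos h hAb
      nlinarith
    · simp [h]; positivity
    · rw [if_neg (not_lt.2 h.le), if_neg h.ne']
      have : 0 < b * A ^ b := mul_pos h hAb
      nlinarith
  calc σ * (Cb * A ^ δ) / Ca
        * ((if a = 0 then Real.log y else y ^ a) - (if a = 0 then Real.log A else A ^ a))
      = σ * Cb * A ^ δ * Ee a u := by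
        rw [diff_eq a A y hA hy, ← hCa, ← hu]
        field_simp
    _ ≤ σ * Cb * A ^ δ * (Real.exp (δ * u) * Ee b u) :=
        mul_le_mul_of_nonneg_left (master hmin hmax u) hK.le
    _ = σ * (y ^ δ * ((if b = 0 then Real.log y else y ^ b)
          - (if b = 0 then Real.log A else A ^ b))) := by
        rw [diff_eq b A y hA hy, ← hCb, ← hu, rpow_diff δ A y hA hy]
        ring

lemma mean_exists {n : ℕ} (hn : 0 < n) {I : Set ℝ} (hIconn : I.OrdConnected)
    {f : ℝ → ℝ} (hf : ContinuousOn f I) (w : Fin n → ℝ) (hw : ∀ i, 0 < w i)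
    (x : Fin n → ℝ) (hx : ∀ i, x i ∈ I) :
    ∃ A ∈ I, f A = (∑ i, w i * f (x i)) / (∑ i, w i) := by
  have hne : (Finset.univ : Finset (Fin n)).Nonempty := ⟨⟨0, hn⟩, Finset.mem_univ _⟩
  obtain ⟨j, -, hj⟩ := Finset.exists_min_image Finset.univ (fun i => f (x i)) hne
  obtain ⟨k, -, hk⟩ := Finset.exists_max_image Finset.univ (fun i => f (x i)) hne
  have hSpos : 0 < ∑ i, w i := Finset.sum_pos (fun i _ => hw i) hne
  have hlo : f (x j) ≤ (∑ i, w i * f (x i)) / (∑ i, w i) := by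
    rw [le_div_iff₀ hSpos, Finset.mul_sum]
    exact Finset.sum_le_sum fun i _ => by
      rw [mul_comm (f (x j))]
      exact mul_le_mul_of_nonneg_left (hj i (Finset.mem_univ i)) (hw i).le
  have hhi : (∑ i, w i * f (x i)) / (∑ i, w i) ≤ f (x k) := by
    rw [div_le_iff₀ hSpos, Finset.mul_sum]
    exact Finset.sum_le_sum fun i _ => by
      rw [mul_comm (f (x k))]
      exact mul_le_mul_of_nonneg_left (hk i (Finset.mem_univ i)) (hw i).le
  have hsubI : uIcc (x j) (x k) ⊆ I := hIconn.uIcc_subset (hx j) (hx k)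
  have hmem : (∑ i, w i * f (x i)) / (∑ i, w i) ∈ uIcc (f (x j)) (f (x k)) := by
    rw [Set.uIcc_of_le (hj k (Finset.mem_univ k))]
    exact ⟨hlo, hhi⟩
  obtain ⟨A, hA, hfA⟩ := intermediate_value_uIcc (hf.mono hsubI) hmem
  exact ⟨A, hsubI hA, hfA⟩

lemma cont_aux (c : ℝ) {I : Set ℝ} (hIpos : I ⊆ Set.Ioi (0:ℝ)) :
    ContinuousOn (fun y => if c = 0 then Real.log y else y ^ c) I := by
  by_cases hc : c = 0
  · simp only [hc, if_true]
    exact Real.continuousOn_log.mono fun y hy => by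
      simp [(Set.mem_Ioi.mp (hIpos hy)).ne']
  · simp only [hc, if_false]
    exact fun y hy =>
      (Real.continuousAt_rpow_const y c (Or.inl (hIpos hy).ne')).continuousWithinAt

lemma main_aux {n : ℕ} (hn0 : 0 < n) {I : Set ℝ} (hIconn : I.OrdConnected)
    (hIpos : I ⊆ Set.Ioi (0:ℝ)) {a b δ γ : ℝ} (hγ : 0 < γ)
    (hmin : min a 0 ≤ δ + min b 0) (hmax : max a 0 ≤ δ + max b 0)
    (w w2 : Fin n → ℝ) (hw : ∀ i, 0 < w i)
    (x : Fin n → ℝ) (hx : ∀ i, x i ∈ I)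
    (hw2 : ∀ i, w2 i = γ * (w i * x i ^ δ)) :
    Function.invFunOn (fun y => if a = 0 then Real.log y else y ^ a) I
      ((∑ i, w i * (if a = 0 then Real.log (x i) else x i ^ a)) / ∑ i, w i)
    ≤ Function.invFunOn (fun y => if b = 0 then Real.log y else y ^ b) I
      ((∑ i, w2 i * (if b = 0 then Real.log (x i) else x i ^ b)) / ∑ i, w2 i) := by
  have hne : (Finset.univ : Finset (Fin n)).Nonempty := ⟨⟨0, hn0⟩, Finset.mem_univ _⟩
  have hxpos : ∀ i, 0 < x i := fun i => hIpos (hx i)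
  have hw2pos : ∀ i, 0 < w2 i := fun i => by
    rw [hw2 i]
    exact mul_pos hγ (mul_pos (hw i) (Real.rpow_pos_of_pos (hxpos i) δ))
  have hexF := mean_exists hn0 hIconn (cont_aux a hIpos) w hw x hx
  have hexG := mean_exists hn0 hIconn (cont_aux b hIpos) w2 hw2pos x hx
  set A := Function.invFunOn (fun y => if a = 0 then Real.log y else y ^ a) I
      ((∑ i, w i * (if a = 0 then Real.log (x i) else x i ^ a)) / ∑ i, w i) with hA
  set B := Function.invFunOn (fun y => if b = 0 then Real.log y else y ^ b) I
      ((∑ i, w2 i * (if b = 0 then Real.log (x i) else x i ^ b)) / ∑ i, w2 i) with hB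
  have hAI : A ∈ I := Function.invFunOn_mem hexF
  have hBI : B ∈ I := Function.invFunOn_mem hexG
  have hFA : (if a = 0 then Real.log A else A ^ a)
      = (∑ i, w i * (if a = 0 then Real.log (x i) else x i ^ a)) / ∑ i, w i :=
    Function.invFunOn_eq hexF
  have hGB : (if b = 0 then Real.log B else B ^ b)
      = (∑ i, w2 i * (if b = 0 then Real.log (x i) else x i ^ b)) / ∑ i, w2 i :=
    Function.invFunOn_eq hexG
  have hApos : (0:ℝ) < A := hIpos hAI
  have hBpos : (0:ℝ) < B := hIpos hBI
  set σ : ℝ := if b < 0 then (-1:ℝ) else 1 with hσ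
  set C : ℝ := σ * ((if b = 0 then 1 else b * A ^ b) * A ^ δ)
      / (if a = 0 then 1 else a * A ^ a) with hC
  set T0 : ℝ := ∑ i, w i * x i ^ δ with hT0def
  set T1 : ℝ := ∑ i, (w i * x i ^ δ) * (if b = 0 then Real.log (x i) else x i ^ b) with hT1def
  have hT0pos : 0 < T0 :=
    Finset.sum_pos (fun i _ => mul_pos (hw i) (Real.rpow_pos_of_pos (hxpos i) δ)) hne
  have hSpos : 0 < ∑ i, w i := Finset.sum_pos (fun i _ => hw i) hne
  -- the w2-quotient equals T1/T0
  have hMg : (∑ i, w2 i * (if b = 0 then Real.log (x i) else x i ^ b)) / ∑ i, w2 i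
      = T1 / T0 := by
    have e1 : ∑ i, w2 i * (if b = 0 then Real.log (x i) else x i ^ b) = γ * T1 := by
      rw [hT1def, Finset.mul_sum]
      exact Finset.sum_congr rfl fun i _ => by rw [hw2 i]; ring
    have e2 : ∑ i, w2 i = γ * T0 := by
      rw [hT0def, Finset.mul_sum]
      exact Finset.sum_congr rfl fun i _ => hw2 i
    rw [e1, e2, mul_div_mul_left _ _ hγ.ne']
  -- pointwise key inequality
  have hkey : ∀ i, C * ((if a = 0 then Real.log (x i) else x i ^ a)
        - (if a = 0 then Real.log A else A ^ a))
      ≤ σ * (x i ^ δ * ((if b = 0 then Real.log (x i) else x i ^ b)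
        - (if b = 0 then Real.log A else A ^ b))) :=
    fun i => pointwise hmin hmax hApos (hxpos i)
  have hsum : ∑ i, w i * (C * ((if a = 0 then Real.log (x i) else x i ^ a)
        - (if a = 0 then Real.log A else A ^ a)))
      ≤ ∑ i, w i * (σ * (x i ^ δ * ((if b = 0 then Real.log (x i) else x i ^ b)
        - (if b = 0 then Real.log A else A ^ b)))) :=
    Finset.sum_le_sum fun i _ => mul_le_mul_of_nonneg_left (hkey i) (hw i).le
  have hSf : ∑ i, w i * (if a = 0 then Real.log (x i) else x i ^ a)
      = (if a = 0 then Real.log A else A ^ a) * ∑ i, w i := by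
    rw [hFA, div_mul_cancel₀ _ hSpos.ne']
  have hzero : ∑ i, w i * (C * ((if a = 0 then Real.log (x i) else x i ^ a)
      - (if a = 0 then Real.log A else A ^ a))) = 0 := by
    have e : ∀ i, w i * (C * ((if a = 0 then Real.log (x i) else x i ^ a)
        - (if a = 0 then Real.log A else A ^ a)))
        = C * (w i * (if a = 0 then Real.log (x i) else x i ^ a))
          - (C * (if a = 0 then Real.log A else A ^ a)) * w i := fun i => by ring
    rw [Finset.sum_congr rfl fun i _ => e i, Finset.sum_sub_distrib,
      ← Finset.mul_sum, ← Finset.mul_sum, hSf]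
    ring
  have hRHS : ∑ i, w i * (σ * (x i ^ δ * ((if b = 0 then Real.log (x i) else x i ^ b)
      - (if b = 0 then Real.log A else A ^ b))))
      = σ * (T1 - (if b = 0 then Real.log A else A ^ b) * T0) := by
    have e : ∀ i, w i * (σ * (x i ^ δ * ((if b = 0 then Real.log (x i) else x i ^ b)
        - (if b = 0 then Real.log A else A ^ b))))
        = σ * ((w i * x i ^ δ) * (if b = 0 then Real.log (x i) else x i ^ b))
          - (σ * (if b = 0 then Real.log A else A ^ b)) * (w i * x i ^ δ) := fun i => by ring
    rw [Finset.sum_congr rfl fun i _ => e i, Finset.sum_sub_distrib,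
      ← Finset.mul_sum, ← Finset.mul_sum, hT1def, hT0def]
    ring
  have hT1eq : T1 = (if b = 0 then Real.log B else B ^ b) * T0 := by
    rw [hGB, hMg, div_mul_cancel₀ _ hT0pos.ne']
  have hfin : 0 ≤ σ * ((if b = 0 then Real.log B else B ^ b)
      - (if b = 0 then Real.log A else A ^ b)) := by
    have h0 : 0 * T0 ≤ (σ * ((if b = 0 then Real.log B else B ^ b)
        - (if b = 0 then Real.log A else A ^ b))) * T0 := by
      have : σ * (T1 - (if b = 0 then Real.log A else A ^ b) * T0)
          = (σ * ((if b = 0 then Real.log B else B ^ b)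
            - (if b = 0 then Real.log A else A ^ b))) * T0 := by
        rw [hT1eq]; ring
      linarith [hsum, hzero, hRHS ▸ (hzero ▸ hsum)]
    exact le_of_mul_le_mul_right h0 hT0pos
  rcases lt_trichotomy b 0 with hb | hb | hb
  · rw [hσ, if_pos hb] at hfin
    simp only [if_neg hb.ne] at hfin
    by_contra hc
    push_neg at hc
    have := Real.rpow_lt_rpow_of_neg hBpos hc hb
    linarith
  · rw [hσ, if_neg (by simp [hb] : ¬ b < 0)] at hfin
    simp only [hb, if_pos] at hfin
    by_contra hc
    push_neg at hc
    have := Real.log_lt_log hBpos hc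
    linarith
  · rw [hσ, if_neg (asymm hb)] at hfin
    simp only [if_neg hb.ne'] at hfin
    by_contra hc
    push_neg at hc
    have := Real.rpow_lt_rpow hBpos.le hc hb
    linarith

/-- The `n`-variable generalized Bajraktarević mean `A_{f,p}` on the interval `I`:
`A_{f,p}(x) = f⁻¹((∑ pᵢ(xᵢ) f(xᵢ)) / (∑ pᵢ(xᵢ)))`. -/
noncomputable def bajMean {n : ℕ} (I : Set ℝ) (f : ℝ → ℝ) (p : Fin n → ℝ → ℝ)
    (x : Fin n → ℝ) : ℝ :=
  Function.invFunOn f I ((∑ i, p i (x i) * f (x i)) / (∑ i, p i (x i)))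

/-- The `i`-th first-order partial derivative of `Φ : Iⁿ → ℝ`. -/
noncomputable def pder {n : ℕ} (Φ : (Fin n → ℝ) → ℝ) (i : Fin n) (y : Fin n → ℝ) : ℝ :=
  deriv (fun t => Φ (Function.update y i t)) (y i)

/-- The second-order partial derivative `∂ᵢ∂ⱼΦ`. -/
noncomputable def pder2 {n : ℕ} (Φ : (Fin n → ℝ) → ℝ) (i j : Fin n) :
    (Fin n → ℝ) → ℝ :=
  pder (pder Φ j) i

/-- `M` is locally smaller than `N`: there is an open set `U ⊆ Iⁿ` containing the
diagonal of `Iⁿ` on which `M ≤ N`. -/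
def LocallySmaller {n : ℕ} (I : Set ℝ) (M N : (Fin n → ℝ) → ℝ) : Prop :=
  ∃ U : Set (Fin n → ℝ), IsOpen U ∧ U ⊆ {x | ∀ i, x i ∈ I} ∧
    (∀ x ∈ I, (fun _ => x) ∈ U) ∧ ∀ x ∈ U, M x ≤ N x

/-- Corollary 3: with power weights `pᵢ(x) = λᵢ x^{αᵢ}`, `qᵢ(x) = μᵢ x^{βᵢ}` on
`I ⊆ (0,∞)` and `f(x) = x^a` (`f = log` if `a = 0`), `g(x) = x^b` (`g = log` if
`b = 0`), if `μᵢ = γλᵢ`, `βᵢ = αᵢ + δ` for all `i` (with `γ > 0`) and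
`min(a,0) ≤ δ + min(b,0)`, `max(a,0) ≤ δ + max(b,0)`, then `A_{f,p}` is globally
smaller than `A_{g,q}`. -/
theorem stmt19 {n : ℕ} (hn : 2 ≤ n) (I : Set ℝ) (hIopen : IsOpen I)
    (hIconn : I.OrdConnected) (hIne : I.Nonempty) (hIpos : I ⊆ Set.Ioi (0 : ℝ))
    (a b : ℝ)
    (lam mu : Fin n → ℝ) (al be : Fin n → ℝ)
    (hlam : ∀ i, 0 < lam i) (hmu : ∀ i, 0 < mu i)
    (γ δ : ℝ) (hγ : 0 < γ)
    (hrel : ∀ i : Fin n, mu i = γ * lam i ∧ be i = al i + δ)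
    (hmin : min a 0 ≤ δ + min b 0) (hmax : max a 0 ≤ δ + max b 0) :
    ∀ x : Fin n → ℝ, (∀ i, x i ∈ I) →
      bajMean I (fun y => if a = 0 then Real.log y else y ^ a)
          (fun i y => lam i * y ^ al i) x ≤
        bajMean I (fun y => if b = 0 then Real.log y else y ^ b)
          (fun i y => mu i * y ^ be i) x := by
  intro x hx
  exact main_aux (lt_of_lt_of_le two_pos hn) hIconn hIpos hγ hmin hmax
    (fun i => lam i * x i ^ al i) (fun i => mu i * x i ^ be i)
    (fun i => mul_pos (hlam i) (Real.rpow_pos_of_pos (hIpos (hx i)) _)) x hx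
    (fun i => by
      show mu i * x i ^ be i = _
      rw [(hrel i).1, (hrel i).2, Real.rpow_add (hIpos (hx i))]
      ring)
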